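/- Let p be an odd prime, t ≥ 1, m = 2^t p. Suppose integers ℓ_1,…,ℓ_{m−1} satisfy that Φ_{2m}(x) divides P(x) = ∑_{j=1}^{m−1} ℓ_j x^j + ∑_{j=m+1}^{2m−1} ℓ_{2m−j} x^j, and ℓ_j = 0 whenever 2p | j. Then ℓ_j = ℓ_{m−j} for every even index j with 1 ≤ j ≤ m−1. -/

import Mathlib

open Polynomial
open Finset
lemma aux_coeff_sum (c : ℕ → ℚ) (n j : ℕ) :
    (∑ k ∈ Finset.Icc 1 n, C (c k) * X ^ k).coeff j
      = if j ∈ Finset.Icc 1 n then c j else 0 := by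
  rw [Polynomial.finset_sum_coeff]
  simp [Polynomial.coeff_C_mul, Polynomial.coeff_X_pow, mul_ite, Finset.sum_ite_eq']

lemma aux_geom (q n : ℕ) (hodd : Odd n) :
    (∑ i ∈ Finset.range n, C ((-1 : ℚ)^i) * X ^ (q * i)) * (X ^ q + 1)
      = X ^ (q * n) + 1 := by
  have hF : (∑ i ∈ Finset.range n, C ((-1:ℚ)^i) * X ^ (q*i))
      = ∑ i ∈ Finset.range n, (-(X^q : ℚ[X]))^i := by
    refine Finset.sum_congr rfl fun i _ => ?_
    rw [map_pow, map_neg, map_one, pow_mul, ← neg_pow]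
  have h := geom_sum_mul (-(X^q : ℚ[X])) n
  rw [hodd.neg_pow, ← pow_mul] at h
  rw [hF]
  linear_combination -h

lemma aux_divisors (p t : ℕ) (hp : p.Prime) (hodd : Odd p) :
    (2 * (2 ^ t * p)).divisors \ (2 ^ t * p).divisors
      = {2 ^ (t + 1), 2 * (2 ^ t * p)} := by
  have hqpos : 0 < 2 ^ t := pow_pos (by norm_num) t
  have hppos : 0 < p := hp.pos
  have hmne : 2 ^ t * p ≠ 0 := by positivity
  have h2mne : 2 * (2 ^ t * p) ≠ 0 := by positivity
  have hkey : 2 * (2 ^ t * p) = 2 ^ (t + 1) * p := by ring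
  have hnd2 : ¬ (2 : ℕ) ∣ p := by
    rw [Nat.two_dvd_ne_zero, Nat.odd_iff.mp hodd]
  ext d
  simp only [Finset.mem_sdiff, Nat.mem_divisors, Finset.mem_insert, Finset.mem_singleton]
  constructor
  · rintro ⟨⟨hd2m, -⟩, hnd⟩
    have hndm : ¬ d ∣ 2 ^ t * p := fun h => hnd ⟨h, hmne⟩
    rw [hkey] at hd2m
    obtain ⟨d1, d2, hd1, hd2, rfl⟩ := exists_dvd_and_dvd_of_dvd_mul hd2m
    obtain ⟨a, ha, rfl⟩ := (Nat.dvd_prime_pow Nat.prime_two).mp hd1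
    have ha' : a = t + 1 := by
      by_contra hne
      exact hndm (mul_dvd_mul (pow_dvd_pow 2 (by omega)) hd2)
    subst ha'
    rcases (Nat.dvd_prime hp).mp hd2 with rfl | rfl
    · left; rw [mul_one]
    · right; rw [hkey]
  · rintro (rfl | rfl)
    · refine ⟨⟨⟨p, by rw [hkey]⟩, h2mne⟩, ?_⟩
      rintro ⟨hdd, -⟩
      rw [pow_succ] at hdd
      exact hnd2 ((Nat.mul_dvd_mul_iff_left hqpos).mp hdd)
    · exact ⟨⟨dvd_rfl, h2mne⟩, fun h => by
        have := Nat.le_of_dvd (by positivity) h.1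
        omega⟩


lemma aux_cyclo (p t : ℕ) (hp : p.Prime) (hodd : Odd p) :
    cyclotomic (2 * (2 ^ t * p)) ℚ
      = ∑ i ∈ Finset.range p, C ((-1 : ℚ)^i) * X ^ (2 ^ t * i) := by
  have hqpos : 0 < 2 ^ t := pow_pos (by norm_num) t
  have hmpos : 0 < 2 ^ t * p := Nat.mul_pos hqpos hp.pos
  have hprop : (2 ^ t * p) ∈ (2 * (2 ^ t * p)).properDivisors := by
    rw [Nat.mem_properDivisors]; exact ⟨⟨2, by ring⟩, by omega⟩
  have h1 := X_pow_sub_one_mul_prod_cyclotomic_eq_X_pow_sub_one_of_dvd ℚ (Nat.mem_properDivisors.mp hprop).1 (by positivity)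
  rw [aux_divisors p t hp hodd] at h1
  have hne : (2:ℕ) ^ (t + 1) ≠ 2 * (2 ^ t * p) := by
    have hk : 2 * (2 ^ t * p) = 2 ^ (t + 1) * p := by ring
    rw [hk]
    intro h
    have h1p : 1 = p := Nat.eq_of_mul_eq_mul_left (show 0 < 2 ^ (t + 1) by positivity)
      (show 2 ^ (t + 1) * 1 = 2 ^ (t + 1) * p by rw [mul_one, ← h])
    exact hp.one_lt.ne' h1p.symm
  rw [Finset.prod_pair hne] at h1
  have hc2 : cyclotomic (2 ^ (t + 1)) ℚ = X ^ (2 ^ t) + 1 := by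
    rw [cyclotomic_prime_pow_eq_geom_sum Nat.prime_two]
    rw [Finset.sum_range_succ, Finset.sum_range_one]
    ring
  rw [hc2] at h1
  have h2 : ((X : ℚ[X]) ^ (2 ^ t * p) - 1) *
      ((X ^ (2 ^ t) + 1) * (∑ i ∈ Finset.range p, C ((-1 : ℚ)^i) * X ^ (2 ^ t * i)))
      = X ^ (2 * (2 ^ t * p)) - 1 := by
    rw [mul_comm (X ^ (2 ^ t) + (1:ℚ[X])), aux_geom (2 ^ t) p hodd,
      show 2 * (2 ^ t * p) = (2 ^ t * p) * 2 by ring, pow_mul]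
    ring
  have hK : ((X : ℚ[X]) ^ (2 ^ t * p) - 1) * (X ^ (2 ^ t) + 1) ≠ 0 := by
    intro h
    have h0 := congrArg (Polynomial.eval 0) h
    simp [hmpos.ne', hqpos.ne'] at h0
  refine mul_left_cancel₀ hK ?_
  rw [mul_assoc, mul_assoc]
  exact h1.trans h2.symm

lemma aux_prod_coeff (p' q : ℕ) (S : ℚ[X]) (hS : ∀ x, q ≤ x → S.coeff x = 0)
    (i r : ℕ) (hi : i < p') (hr : r < q) :
    ((∑ i' ∈ Finset.range p', C ((-1 : ℚ)^i') * X ^ (q * i')) * S).coeff (q * i + r)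
      = (-1)^i * S.coeff r := by
  have hterm : ∀ i' ∈ Finset.range p', i' ≠ i →
      (C ((-1 : ℚ)^i') * X ^ (q * i') * S).coeff (q * i + r) = 0 := by
    intro i' _ hne
    rw [mul_right_comm, Polynomial.coeff_mul_X_pow']
    split_ifs with hle
    · rw [Polynomial.coeff_C_mul]
      rcases lt_or_gt_of_ne hne with hlt | hgt
      · have hq1 : q * i' + q ≤ q * i := by
          have := Nat.mul_le_mul_left q (show i' + 1 ≤ i by omega)
          simpa [Nat.mul_succ] using this
        rw [hS _ (by omega), mul_zero]
      · exfalso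
        have hq1 : q * i + q ≤ q * i' := by
          have := Nat.mul_le_mul_left q (show i + 1 ≤ i' by omega)
          simpa [Nat.mul_succ] using this
        omega
    · rfl
  rw [Finset.sum_mul, Polynomial.finset_sum_coeff,
    Finset.sum_eq_single_of_mem i (Finset.mem_range.mpr hi) hterm, mul_right_comm,
    Polynomial.coeff_mul_X_pow', if_pos (Nat.le_add_right _ _), Nat.add_sub_cancel_left,
    Polynomial.coeff_C_mul]



theorem coeff_symmetry (p t : ℕ) (hp : p.Prime) (hodd : Odd p) (ht : 1 ≤ t)
    (m : ℕ) (hm : m = 2 ^ t * p) (ℓ : ℕ → ℤ)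
    (hℓ0 : ∀ j, 2 * p ∣ j → ℓ j = 0)
    (hdvd : Polynomial.cyclotomic (2 * m) ℚ ∣
      (∑ j ∈ Finset.Icc 1 (m - 1), Polynomial.C ((ℓ j : ℚ)) * Polynomial.X ^ j +
        ∑ j ∈ Finset.Icc (m + 1) (2 * m - 1),
          Polynomial.C ((ℓ (2 * m - j) : ℚ)) * Polynomial.X ^ j)) :
    ∀ j, 1 ≤ j → j ≤ m - 1 → Even j → ℓ j = ℓ (m - j) := by
  intro j hj1 hj2 hjeven
  have hqpos : 0 < 2 ^ t := pow_pos (by norm_num) t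
  have hp3 : 3 ≤ p := by
    have h1 := hp.two_le
    have h2 := Nat.odd_iff.mp hodd
    omega
  have hmpos : 0 < m := by rw [hm]; exact Nat.mul_pos hqpos hp.pos
  have h2t : (2:ℕ) ^ t = 2 * 2 ^ (t - 1) := by
    conv_lhs => rw [show t = (t - 1) + 1 by omega]
    rw [pow_succ']
  have h7 : 2 ^ t * (p - 1) + 2 ^ t = 2 ^ t * p := by
    rw [← Nat.mul_succ]; congr 1; omega
  have h2p_m : 2 * p ∣ m := by
    refine ⟨2 ^ (t - 1), ?_⟩; rw [hm, h2t]; ring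
  set E : ℚ[X] := ∑ k ∈ Finset.Icc 1 (m - 1), C ((ℓ k : ℚ) - (ℓ (m - k) : ℚ)) * X ^ k with hE
  set G : ℚ[X] := ∑ k ∈ Finset.Icc 1 (m - 1), C ((ℓ (m - k) : ℚ)) * X ^ k with hG
  have hPEG : (∑ j ∈ Finset.Icc 1 (m - 1), C ((ℓ j : ℚ)) * X ^ j +
      ∑ j ∈ Finset.Icc (m + 1) (2 * m - 1), C ((ℓ (2 * m - j) : ℚ)) * X ^ j)
      = E + (X ^ m + 1) * G := by
    have hre : ∑ j ∈ Finset.Icc (m + 1) (2 * m - 1), C ((ℓ (2 * m - j) : ℚ)) * X ^ j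
        = ∑ k ∈ Finset.Icc 1 (m - 1), C ((ℓ (m - k) : ℚ)) * X ^ (m + k) := by
      rw [show 2 * m - 1 = m + (m - 1) by omega, show m + 1 = m + 1 from rfl,
        ← Finset.map_add_left_Icc, Finset.sum_map]
      refine Finset.sum_congr rfl fun k hk => ?_
      have hk' := Finset.mem_Icc.mp hk
      simp only [addLeftEmbedding_apply]
      rw [show 2 * m - (m + k) = m - k by omega]
    rw [hre, hE, hG, Finset.mul_sum, ← Finset.sum_add_distrib, ← Finset.sum_add_distrib]
    refine Finset.sum_congr rfl fun k _ => ?_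
    rw [map_sub]
    ring
  have hXm : cyclotomic (2 * m) ℚ ∣ (X ^ m + 1 : ℚ[X]) := by
    refine ⟨X ^ (2 ^ t) + 1, ?_⟩
    rw [hm, aux_cyclo p t hp hodd]
    exact (aux_geom (2 ^ t) p hodd).symm
  have hdvdE : cyclotomic (2 * m) ℚ ∣ E := by
    rw [hPEG] at hdvd
    have h2 : cyclotomic (2 * m) ℚ ∣ (X ^ m + 1) * G := hXm.mul_right G
    have h4 := dvd_sub hdvd h2
    simpa using h4
  have hEco : ∀ n, E.coeff n =
      if n ∈ Finset.Icc 1 (m - 1) then ((ℓ n : ℚ) - (ℓ (m - n) : ℚ)) else 0 := by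
    intro n
    rw [hE]
    exact aux_coeff_sum (fun k => (ℓ k : ℚ) - (ℓ (m - k) : ℚ)) (m - 1) n
  suffices hkey : E.coeff j = 0 by
    have h5 : (if j ∈ Finset.Icc 1 (m - 1) then ((ℓ j : ℚ) - (ℓ (m - j) : ℚ)) else 0) = 0 :=
      (hEco j).symm.trans hkey
    rw [if_pos (Finset.mem_Icc.mpr ⟨hj1, hj2⟩)] at h5
    exact_mod_cast sub_eq_zero.mp h5
  by_cases hE0 : E = 0
  · rw [hE0]; simp
  obtain ⟨S, hS⟩ := hdvdE
  have hS0 : S ≠ 0 := by rintro rfl; rw [mul_zero] at hS; exact hE0 hS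
  have hdegE : E.natDegree ≤ m - 1 := by
    rw [hE]
    refine Polynomial.natDegree_sum_le_of_forall_le _ _ fun k hk => ?_
    refine le_trans (Polynomial.natDegree_C_mul_le _ _) ?_
    rw [Polynomial.natDegree_X_pow]
    exact (Finset.mem_Icc.mp hk).2
  have hdegΦ : (cyclotomic (2 * m) ℚ).natDegree = 2 ^ t * (p - 1) := by
    rw [Polynomial.natDegree_cyclotomic, hm, show 2 * (2 ^ t * p) = 2 ^ (t + 1) * p by ring,
      Nat.totient_mul ((Nat.coprime_two_left.mpr hodd).pow_left (t + 1)),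
      Nat.totient_prime_pow Nat.prime_two (by omega : 0 < t + 1), Nat.totient_prime hp]
    norm_num
  have hdegS : S.natDegree < 2 ^ t := by
    have hmul := Polynomial.natDegree_mul (cyclotomic_ne_zero (2 * m) ℚ) hS0
    rw [← hS] at hmul
    have h6 : 2 ^ t * (p - 1) + S.natDegree ≤ m - 1 := by
      rw [← hdegΦ, ← hmul]; exact hdegE
    rw [hm] at h6
    generalize hQ : (2:ℕ) ^ t = Q at h6 h7 hqpos ⊢
    generalize hA : Q * (p - 1) = A at h6 h7
    generalize hB : Q * p = B at h6 h7
    omega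
  have hScoeff : ∀ x, 2 ^ t ≤ x → S.coeff x = 0 := fun x hx =>
    Polynomial.coeff_eq_zero_of_natDegree_lt (lt_of_lt_of_le hdegS hx)
  have hSF : E = (∑ i' ∈ Finset.range p, C ((-1 : ℚ) ^ i') * X ^ (2 ^ t * i')) * S := by
    rw [hS]; congr 1; rw [hm]; exact aux_cyclo p t hp hodd
  set i := j / 2 ^ t with hidef
  set r := j % 2 ^ t with hrdef
  have hji : 2 ^ t * i + r = j := Nat.div_add_mod j (2 ^ t)
  have hi : i < p := by
    rw [hidef, Nat.div_lt_iff_lt_mul hqpos, mul_comm]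
    rw [hm] at hj2
    omega
  have hr : r < 2 ^ t := Nat.mod_lt j hqpos
  have hreven : Even r := by
    have hq2 : 2 ∣ 2 ^ t := dvd_pow_self 2 (by omega)
    obtain ⟨a, ha⟩ := hq2.mul_right i
    obtain ⟨b, hb⟩ := hjeven
    rw [Nat.even_iff]
    omega
  haveI := Fact.mk hp
  have hp2ne : ¬ (p : ℕ) ∣ 2 := by
    intro h
    have := Nat.le_of_dvd (by norm_num) h
    omega
  have hcast_ne : ((2 : ZMod p)) ^ t ≠ 0 := by
    refine pow_ne_zero t fun h => ?_
    have : ((2 : ℕ) : ZMod p) = 0 := by exact_mod_cast h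
    exact hp2ne ((ZMod.natCast_eq_zero_iff 2 p).mp this)
  set u : ZMod p := (-(r : ZMod p)) * ((2 : ZMod p) ^ t)⁻¹ with hu
  set i0 := u.val with hi0def
  have hi0lt : i0 < p := ZMod.val_lt u
  have hdvd_p : p ∣ 2 ^ t * i0 + r := by
    have hz : ((2 ^ t * i0 + r : ℕ) : ZMod p) = 0 := by
      push_cast
      rw [hi0def, ZMod.natCast_val, ZMod.cast_id, hu]
      linear_combination (-(r : ZMod p)) * mul_inv_cancel₀ hcast_ne
    exact (ZMod.natCast_eq_zero_iff _ p).mp hz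
  have h2dvd : 2 ∣ 2 ^ t * i0 + r := by
    have hq2 : 2 ∣ 2 ^ t := dvd_pow_self 2 (by omega)
    obtain ⟨c, hc⟩ := hreven
    exact dvd_add (hq2.mul_right i0) ⟨c, by omega⟩
  have h2p_dvd : 2 * p ∣ 2 ^ t * i0 + r :=
    Nat.Coprime.mul_dvd_of_dvd_of_dvd (Nat.coprime_two_left.mpr hodd) h2dvd hdvd_p
  have ha_le : 2 ^ t * i0 + r ≤ m - 1 := by
    have h8 : 2 ^ t * i0 ≤ 2 ^ t * (p - 1) := Nat.mul_le_mul_left _ (by omega)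
    rw [hm]
    omega
  have hEa : E.coeff (2 ^ t * i0 + r) = 0 := by
    rcases Nat.eq_zero_or_pos (2 ^ t * i0 + r) with hz | hpos
    · rw [hz, hEco 0]; simp
    · rw [hEco, if_pos (Finset.mem_Icc.mpr ⟨hpos, ha_le⟩),
        hℓ0 _ h2p_dvd, hℓ0 _ (Nat.dvd_sub h2p_m h2p_dvd)]
      simp
  have h9 := aux_prod_coeff p (2 ^ t) S hScoeff i0 r hi0lt hr
  rw [← hSF] at h9
  have hSr : S.coeff r = 0 := by
    rcases mul_eq_zero.mp (h9.symm.trans hEa) with h | h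
    · exact absurd h (pow_ne_zero _ (by norm_num))
    · exact h
  have h10 := aux_prod_coeff p (2 ^ t) S hScoeff i r hi hr
  rw [← hSF, hji] at h10
  rw [h10, hSr, mul_zero]
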